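/- Let f : M → M be a homeomorphism of a closed manifold M (a compact topological manifold without boundary) of dimension at least 2, and let μ be a finitely supported Borel probability measure on M. If f is μ-topologically stable, then f has the μ-shadowing property. -/

import Mathlib

open Metric Set Filter

lemma euclidean_ball_infinite {n : ℕ} (hn : 1 ≤ n) (u : EuclideanSpace ℝ (Fin n)) {r : ℝ}
    (hr : 0 < r) : (Metric.ball u r).Infinite := by
  have i0 : Fin n := ⟨0, hn⟩
  set v : EuclideanSpace ℝ (Fin n) := EuclideanSpace.single i0 1 with hv
  have hnv : ‖v‖ = 1 := by simp [hv]
  have hinj : Set.InjOn (fun t : ℝ => u + t • v) (Set.Ioo 0 r) := by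
    intro s hs t ht hst
    have : s • v = t • v := by
      have := hst; simpa using congrArg (fun w => w - u) this
    have := congrArg (fun w => ‖w‖) this
    simp only [norm_smul, hnv, mul_one, Real.norm_eq_abs] at this
    rw [abs_of_pos hs.1, abs_of_pos ht.1] at this
    exact this
  have hIoo : (Set.Ioo (0:ℝ) r).Infinite := Set.infinite_coe_iff.mp (Set.Ioo.infinite hr)
  have himg : ((fun t : ℝ => u + t • v) '' Set.Ioo 0 r).Infinite := hIoo.image hinj
  refine himg.mono ?_
  rintro w ⟨t, ht, rfl⟩
  have : dist (u + t • v) u = |t| := by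
    simp [dist_eq_norm, norm_smul, hnv]
  rw [Metric.mem_ball, this, abs_of_pos ht.1]
  exact ht.2

lemma ball_infinite {n : ℕ} (hn : 1 ≤ n) {M : Type*} [TopologicalSpace M]
    [ChartedSpace (EuclideanSpace ℝ (Fin n)) M] (z : M) {U : Set M} (hU : IsOpen U)
    (hz : z ∈ U) : U.Infinite := by
  set E := EuclideanSpace ℝ (Fin n)
  set c := chartAt E z with hc
  have hzs : z ∈ c.source := mem_chart_source E z
  set V := c.source ∩ U with hV
  have hVo : IsOpen V := c.open_source.inter hU
  have hzV : z ∈ V := ⟨hzs, hz⟩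
  have himg : IsOpen (c '' V) := c.isOpen_image_of_subset_source hVo inter_subset_left
  have hmem : c z ∈ c '' V := mem_image_of_mem _ hzV
  obtain ⟨r, hr, hball⟩ := Metric.isOpen_iff.mp himg _ hmem
  have hbi : (Metric.ball (c z) r).Infinite := euclidean_ball_infinite hn _ hr
  have hsub : c.symm '' Metric.ball (c z) r ⊆ V := by
    rintro w ⟨u, hu, rfl⟩
    obtain ⟨x, hxV, rfl⟩ := hball hu
    rwa [c.left_inv (inter_subset_left hxV)]
  have : (c.symm '' Metric.ball (c z) r).Infinite := by
    refine hbi.image (c.symm.injOn.mono ?_)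
    refine (hball.trans ?_)
    rw [c.symm_source, ← c.image_source_eq_target]
    exact image_mono inter_subset_left
  exact (this.mono hsub).mono inter_subset_right
lemma localMove {n : ℕ} {M : Type*} [MetricSpace M]
    [CompactSpace M] [ChartedSpace (EuclideanSpace ℝ (Fin n)) M] (z : M) {η : ℝ} (hη : 0 < η) :
    ∃ r > 0, ∃ δ > 0, ∀ a ∈ Metric.ball z r, ∀ b : M, dist a b ≤ δ → ∀ ρ, 0 < ρ → ρ ≤ r →
      ∃ φ : M → M, Continuous φ ∧ φ a = b ∧ (∀ x, dist (φ x) x ≤ η) ∧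
        ∀ x ∉ Metric.ball a ρ, φ x = x := by
  classical
  set E := EuclideanSpace ℝ (Fin n)
  set c := chartAt E z with hc
  have hzs : z ∈ c.source := mem_chart_source E z
  obtain ⟨ε0, hε0, hcb⟩ := (Metric.nhds_basis_closedBall.mem_iff).mp
    (c.open_source.mem_nhds hzs)
  set r0 := ε0 / 2 with hr0def
  have hr0 : 0 < r0 := by positivity
  have hsub : closedBall z (2 * r0) ⊆ c.source := by
    rw [hr0def]; rw [show 2 * (ε0 / 2) = ε0 by ring]; exact hcb
  set K := c '' closedBall z (2 * r0) with hK
  have hKc : IsCompact K := (Metric.isClosed_closedBall.isCompact).image_of_continuousOn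
    (c.continuousOn.mono hsub)
  have hKt : K ⊆ c.target := by
    rw [hK, ← c.image_source_eq_target]; exact image_mono hsub
  obtain ⟨ζ, hζ, hth⟩ := hKc.exists_thickening_subset_open c.open_target hKt
  set K' := cthickening (ζ / 2) K with hK'
  have hK'c : IsCompact K' := hKc.cthickening
  have hK't : K' ⊆ c.target :=
    (cthickening_subset_thickening' hζ (half_lt_self hζ) K).trans hth
  -- uniform continuity of c.symm on K'
  obtain ⟨κ, hκ, hκp⟩ := (uniformContinuousOn_iff_le.mp
    (hK'c.uniformContinuousOn_of_continuous (c.continuousOn_symm.mono hK't))) η hη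
  set κ' := min κ (ζ / 2) with hκ'
  have hκ'0 : 0 < κ' := lt_min hκ (by positivity)
  -- uniform continuity of c on the closed ball
  obtain ⟨δ0, hδ0, hδ0p⟩ := (uniformContinuousOn_iff_le.mp
    ((Metric.isClosed_closedBall.isCompact : IsCompact (closedBall z (2*r0))).uniformContinuousOn_of_continuous
      (c.continuousOn.mono hsub))) κ' hκ'0
  refine ⟨r0, hr0, min δ0 r0, lt_min hδ0 hr0, ?_⟩
  intro a ha b hab ρ hρ hρr
  have hacb : a ∈ closedBall z (2 * r0) := by
    rw [mem_closedBall]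
    have := mem_ball.mp ha
    nlinarith
  have hbcb : b ∈ closedBall z (2 * r0) := by
    rw [mem_closedBall]
    have h1 : dist b z ≤ dist b a + dist a z := dist_triangle b a z
    have h2 : dist a z < r0 := mem_ball.mp ha
    have h3 : dist b a ≤ min δ0 r0 := by rw [dist_comm]; exact hab
    have := min_le_right δ0 r0
    nlinarith
  have hsupp : closedBall a ρ ⊆ closedBall z (2 * r0) := by
    intro x hx
    rw [mem_closedBall] at hx ⊢
    have h2 : dist a z < r0 := mem_ball.mp ha
    have := dist_triangle x a z
    nlinarith
  set v : E := c b - c a with hv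
  have hvn : ‖v‖ ≤ κ' := by
    have := hδ0p b hbcb a hacb (by rw [dist_comm]; exact hab.trans (min_le_left _ _))
    rwa [dist_eq_norm] at this
  set w : M → ℝ := fun x => max 0 (1 - dist x a / ρ) with hw
  have hwc : Continuous w := by fun_prop
  have hw0 : ∀ x, 0 ≤ w x := fun x => le_max_left _ _
  have hw1 : ∀ x, w x ≤ 1 := by
    intro x
    apply max_le (by norm_num)
    have : 0 ≤ dist x a / ρ := by positivity
    linarith
  set inner : M → M := fun x => c.symm (c x + w x • v) with hinner
  have hKK' : K ⊆ K' := self_subset_cthickening K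
  have hmemK : ∀ x ∈ closedBall a ρ, c x ∈ K := fun x hx => mem_image_of_mem _ (hsupp hx)
  have hnwv : ∀ x, ‖w x • v‖ ≤ κ' := by
    intro x
    rw [norm_smul, Real.norm_eq_abs, abs_of_nonneg (hw0 x)]
    calc w x * ‖v‖ ≤ 1 * ‖v‖ := by
          apply mul_le_mul_of_nonneg_right (hw1 x) (norm_nonneg v)
      _ = ‖v‖ := one_mul _
      _ ≤ κ' := hvn
  have hmemK' : ∀ x ∈ closedBall a ρ, c x + w x • v ∈ K' := by
    intro x hx
    apply mem_cthickening_of_dist_le _ (c x) _ _ (hmemK x hx)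
    rw [dist_eq_norm, add_sub_cancel_left]
    exact (hnwv x).trans (min_le_right _ _)
  have hdisp : ∀ x ∈ closedBall a ρ, dist (inner x) x ≤ η := by
    intro x hx
    have hxs : x ∈ c.source := hsub (hsupp hx)
    have : dist (inner x) x = dist (c.symm (c x + w x • v)) (c.symm (c x)) := by
      rw [c.left_inv hxs]
    rw [this]
    apply hκp _ (hmemK' x hx) _ (hKK' (hmemK x hx))
    rw [dist_eq_norm, add_sub_cancel_left]
    exact (hnwv x).trans (min_le_left _ _)
  have hsphere : ∀ x, dist x a = ρ → inner x = x := by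
    intro x hx
    have hxw : w x = 0 := by
      rw [hw]; simp only [hx]
      rw [div_self (ne_of_gt hρ)]
      simp
    rw [hinner]; simp only [hxw, zero_smul, add_zero]
    exact c.left_inv (hsub (hsupp (by rw [mem_closedBall, hx])))
  have hinnerCA : ∀ x ∈ closedBall a ρ, ContinuousAt inner x := by
    intro x hx
    have hxs : x ∈ c.source := hsub (hsupp hx)
    have h1 : ContinuousAt (fun y => c y + w y • v) x :=
      ((c.continuousAt hxs).add ((hwc.continuousAt).smul continuousAt_const))
    have h2 : ContinuousAt c.symm (c x + w x • v) :=
      c.symm.continuousAt (by rw [OpenPartialHomeomorph.symm_source]; exact hK't (hmemK' x hx))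
    show ContinuousAt (c.symm ∘ fun y => c y + w y • v) x
    exact ContinuousAt.comp (f := fun y => (c : M → _) y + w y • v) h2 h1
  set φ : M → M := fun x => if x ∈ closedBall a ρ then inner x else x with hφ
  refine ⟨φ, ?_, ?_, ?_, ?_⟩
  · -- continuity
    rw [continuous_iff_continuousAt]
    intro x
    rcases lt_trichotomy (dist x a) ρ with hlt | heq | hgt
    · have hx : x ∈ closedBall a ρ := by rw [mem_closedBall]; exact le_of_lt hlt
      refine (hinnerCA x hx).congr ?_
      refine Filter.eventuallyEq_of_mem (Metric.isOpen_ball.mem_nhds hlt) ?_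
      intro y hy
      show inner y = if y ∈ closedBall a ρ then inner y else y
      rw [if_pos (ball_subset_closedBall hy)]
    · have hx : x ∈ closedBall a ρ := by rw [mem_closedBall, heq]
      have hφx : φ x = x := by
        show (if x ∈ closedBall a ρ then inner x else x) = x
        rw [if_pos hx, hsphere x heq]
      rw [ContinuousAt, hφx]
      apply Filter.Tendsto.if
      · refine Filter.Tendsto.mono_left ?_ inf_le_left
        have := (hinnerCA x hx).tendsto
        rwa [hsphere x heq] at this
      · exact Filter.Tendsto.mono_left tendsto_id inf_le_left
    · have hx : x ∉ closedBall a ρ := by rw [mem_closedBall]; linarith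
      refine ContinuousAt.congr continuousAt_id ?_
      refine Filter.eventuallyEq_of_mem (isOpen_compl_iff.mpr isClosed_closedBall |>.mem_nhds hx) ?_
      intro y hy
      show id y = if y ∈ closedBall a ρ then inner y else y
      rw [if_neg hy]; rfl
  · -- φ a = b
    have ha' : a ∈ closedBall a ρ := mem_closedBall_self (le_of_lt hρ)
    show (if a ∈ closedBall a ρ then inner a else a) = b
    rw [if_pos ha', hinner]
    have hwa : w a = 1 := by rw [hw]; simp [le_of_lt hρ]
    simp only [hwa, one_smul, hv]
    rw [add_sub_cancel]
    exact c.left_inv (hsub hbcb)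
  · intro x
    show dist (if x ∈ closedBall a ρ then inner x else x) x ≤ η
    by_cases hx : x ∈ closedBall a ρ
    · rw [if_pos hx]; exact hdisp x hx
    · rw [if_neg hx, dist_self]; exact le_of_lt hη
  · intro x hx
    show (if x ∈ closedBall a ρ then inner x else x) = x
    by_cases hx' : x ∈ closedBall a ρ
    · have : dist x a = ρ := le_antisymm (mem_closedBall.mp hx') (not_lt.mp (fun h => hx (mem_ball.mpr h)))
      rw [if_pos hx', hsphere x this]
    · rw [if_neg hx']
lemma moveA {n : ℕ} {M : Type*} [MetricSpace M]
    [CompactSpace M] [ChartedSpace (EuclideanSpace ℝ (Fin n)) M] {η : ℝ} (hη : 0 < η) :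
    ∃ δ > 0, ∀ a b : M, dist a b ≤ δ → ∀ ρ, 0 < ρ →
      ∃ φ : M → M, Continuous φ ∧ φ a = b ∧ (∀ x, dist (φ x) x ≤ η) ∧
        ∀ x ∉ Metric.ball a ρ, φ x = x := by
  classical
  choose r hr δ hδ H using fun z : M => localMove (n := n) z hη
  obtain ⟨s, hs⟩ := isCompact_univ.elim_finite_subcover (fun z : M => Metric.ball z (r z))
    (fun z => Metric.isOpen_ball) (by intro x _; exact mem_iUnion.mpr ⟨x, mem_ball_self (hr x)⟩)
  by_cases hsne : s.Nonempty
  · refine ⟨s.inf' hsne δ, ?_, ?_⟩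
    · exact (Finset.lt_inf'_iff hsne).mpr (fun z _ => hδ z)
    · intro a b hab ρ hρ
      obtain ⟨z, hz, haz⟩ := mem_iUnion₂.mp (hs (mem_univ a))
      have hδz : s.inf' hsne δ ≤ δ z := Finset.inf'_le _ hz
      obtain ⟨φ, h1, h2, h3, h4⟩ := H z a haz b (hab.trans hδz) (min ρ (r z))
        (lt_min hρ (hr z)) (min_le_right _ _)
      exact ⟨φ, h1, h2, h3, fun x hx => h4 x (fun hc => hx (Metric.ball_subset_ball (min_le_left _ _) hc))⟩
  · refine ⟨1, one_pos, ?_⟩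
    intro a
    exact absurd (mem_iUnion₂.mp (hs (mem_univ a))) (by simp [Finset.not_nonempty_iff_eq_empty.mp hsne])
lemma glue {M : Type*} [MetricSpace M] {η r : ℝ} (hr : 0 < r) (hη : 0 ≤ η) :
    ∀ (N : ℕ) (a b : Fin N → M) (φs : Fin N → M → M),
      (∀ j, Continuous (φs j)) → (∀ j, φs j (a j) = b j) →
      (∀ j x, dist (φs j x) x ≤ η) → (∀ j x, x ∉ Metric.ball (a j) r → φs j x = x) →
      (Pairwise fun j k => Disjoint (closedBall (a j) r) (closedBall (a k) r)) →
      ∃ φ : M → M, Continuous φ ∧ (∀ j, φ (a j) = b j) ∧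
        (∀ x, dist (φ x) x ≤ η) ∧
        (∀ x, (∀ j, x ∉ closedBall (a j) r) → φ x = x) := by
  classical
  intro N
  induction N with
  | zero =>
    intro a b φs _ _ _ _ _
    refine ⟨id, continuous_id, fun j => j.elim0, fun x => ?_, fun x _ => rfl⟩
    simpa using hη
  | succ N ih =>
    intro a b φs hc hab hdisp hsupp hdisj
    obtain ⟨φ', h'c, h'ab, h'disp, h'supp⟩ := ih (fun j => a j.castSucc) (fun j => b j.castSucc)
      (fun j => φs j.castSucc) (fun j => hc _) (fun j => hab _) (fun j => hdisp _)
      (fun j => hsupp _) (fun j k hjk => hdisj (by simpa using Fin.castSucc_injective N |>.ne hjk))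
    set L := Fin.last N
    refine ⟨fun x => if x ∈ closedBall (a L) r then φs L x else φ' x, ?_, ?_, ?_, ?_⟩
    · refine Continuous.if ?_ (hc L) h'c
      intro x hx
      have hxs : x ∈ sphere (a L) r := by
        have := frontier_closedBall_subset_sphere (x := a L) (ε := r)
        exact this (by simpa only [Set.setOf_mem_eq] using hx)
      have hx1 : φs L x = x := hsupp L x (by
        intro hc'
        have := mem_ball.mp hc'
        have := mem_sphere.mp hxs
        linarith)
      have hx2 : φ' x = x := by
        apply h'supp
        intro j hj
        have hd := hdisj (show j.castSucc ≠ L from Fin.castSucc_lt_last j |>.ne)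
        exact (hd.ne_of_mem hj (sphere_subset_closedBall hxs)) rfl
      rw [hx1, hx2]
    · intro j
      refine Fin.lastCases ?_ ?_ j
      · show (if a L ∈ closedBall (a L) r then φs L (a L) else φ' (a L)) = b L
        rw [if_pos (mem_closedBall_self hr.le)]
        exact hab L
      · intro i
        show (if a i.castSucc ∈ closedBall (a L) r then φs L (a i.castSucc) else φ' (a i.castSucc)) = b i.castSucc
        rw [if_neg ?_]
        · exact h'ab i
        · intro hmem
          have hd := hdisj (show i.castSucc ≠ L from (Fin.castSucc_lt_last i).ne)
          exact (hd.ne_of_mem (mem_closedBall_self hr.le) hmem) rfl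
    · intro x
      by_cases hx : x ∈ closedBall (a L) r
      · show dist (if x ∈ closedBall (a L) r then φs L x else φ' x) x ≤ η
        rw [if_pos hx]; exact hdisp L x
      · show dist (if x ∈ closedBall (a L) r then φs L x else φ' x) x ≤ η
        rw [if_neg hx]; exact h'disp x
    · intro x hx
      show (if x ∈ closedBall (a L) r then φs L x else φ' x) = x
      rw [if_neg (hx L)]
      exact h'supp x (fun j => hx _)
lemma moveB {n : ℕ} {M : Type*} [MetricSpace M]
    [CompactSpace M] [ChartedSpace (EuclideanSpace ℝ (Fin n)) M] {η : ℝ} (hη : 0 < η) :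
    ∃ δ > 0, ∀ (N : ℕ) (a b : Fin N → M), Function.Injective a →
      (∀ j, dist (a j) (b j) ≤ δ) →
      ∃ φ : M → M, Continuous φ ∧ (∀ j, φ (a j) = b j) ∧ ∀ x, dist (φ x) x ≤ η := by
  classical
  obtain ⟨δ, hδ, Hm⟩ := moveA (n := n) (M := M) hη
  refine ⟨δ, hδ, ?_⟩
  intro N a b hinj hab
  -- choose a radius
  set S : Finset (Fin N × Fin N) := Finset.univ.filter (fun p => p.1 ≠ p.2) with hS
  have key : ∃ r : ℝ, 0 < r ∧ ∀ j k : Fin N, j ≠ k → r + r < dist (a j) (a k) := by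
    by_cases hne : S.Nonempty
    · refine ⟨(S.inf' hne fun p => dist (a p.1) (a p.2)) / 3, ?_, ?_⟩
      · apply div_pos _ (by norm_num)
        rw [Finset.lt_inf'_iff]
        rintro ⟨j, k⟩ hjk
        rw [hS, Finset.mem_filter] at hjk
        exact dist_pos.mpr (fun h => hjk.2 (hinj h))
      · intro j k hjk
        have h1 : S.inf' hne (fun p => dist (a p.1) (a p.2)) ≤ dist (a j) (a k) :=
          Finset.inf'_le _ (show (j, k) ∈ S by rw [hS, Finset.mem_filter]; exact ⟨Finset.mem_univ _, hjk⟩)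
        have h2 : 0 < dist (a j) (a k) := dist_pos.mpr (fun h => hjk (hinj h))
        set D := S.inf' hne (fun p => dist (a p.1) (a p.2))
        have : 0 < D := by
          rw [Finset.lt_inf'_iff]
          rintro ⟨j', k'⟩ hjk'
          rw [hS, Finset.mem_filter] at hjk'
          exact dist_pos.mpr (fun h => hjk'.2 (hinj h))
        linarith
    · refine ⟨1, one_pos, ?_⟩
      intro j k hjk
      exact absurd (show (j, k) ∈ S by rw [hS, Finset.mem_filter]; exact ⟨Finset.mem_univ _, hjk⟩)
        (fun h => hne ⟨_, h⟩)
  obtain ⟨r, hr, hrd⟩ := key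
  have Hφ : ∀ j : Fin N, ∃ φ : M → M, Continuous φ ∧ φ (a j) = b j ∧
      (∀ x, dist (φ x) x ≤ η) ∧ ∀ x ∉ Metric.ball (a j) r, φ x = x :=
    fun j => Hm (a j) (b j) (hab j) r hr
  choose φs h1 h2 h3 h4 using Hφ
  obtain ⟨φ, hφc, hφab, hφd, _⟩ := glue hr hη.le N a b φs h1 h2 h3 h4
    (fun j k hjk => Metric.closedBall_disjoint_closedBall (hrd j k hjk))
  exact ⟨φ, hφc, hφab, hφd⟩
lemma exists_inj_seq {n : ℕ} (hn : 1 ≤ n) {M : Type*} [MetricSpace M]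
    [ChartedSpace (EuclideanSpace ℝ (Fin n)) M] (x : ℕ → M) {ρ : ℝ} (hρ : 0 < ρ) :
    ∃ x' : ℕ → M, x' 0 = x 0 ∧ (∀ m, dist (x' m) (x m) ≤ ρ) ∧ Function.Injective x' := by
  classical
  have hpick : ∀ (z : M) (F : Finset M), ∃ w : M, dist w z ≤ ρ ∧ w ∉ F := by
    intro z F
    have hinf : (Metric.ball z ρ).Infinite :=
      ball_infinite hn z Metric.isOpen_ball (mem_ball_self hρ)
    obtain ⟨w, hw⟩ := (hinf.diff F.finite_toSet).nonempty
    exact ⟨w, (mem_ball.mp hw.1).le, by simpa using hw.2⟩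
  choose pick hp1 hp2 using hpick
  set S : ℕ → M × Finset M := fun m => Nat.rec ((x 0), ({x 0} : Finset M))
    (fun m prev => (pick (x (m+1)) prev.2, insert (pick (x (m+1)) prev.2) prev.2)) m with hSdef
  have hstep1 : ∀ m, (S (m+1)).1 = pick (x (m+1)) (S m).2 := fun m => rfl
  have hstep2 : ∀ m, (S (m+1)).2 = insert ((S (m+1)).1) (S m).2 := fun m => rfl
  have hmem : ∀ m, (S m).1 ∈ (S m).2 := by
    intro m
    cases m with
    | zero => exact Finset.mem_singleton_self _
    | succ m => rw [hstep2]; exact Finset.mem_insert_self _ _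
  have hcum : ∀ k m, k ≤ m → (S k).1 ∈ (S m).2 := by
    intro k m hkm
    induction m with
    | zero => rw [Nat.le_zero.mp hkm]; exact hmem 0
    | succ m ih =>
      rcases Nat.lt_or_ge k (m+1) with h | h
      · rw [hstep2]; exact Finset.mem_insert_of_mem (ih (Nat.lt_succ_iff.mp h))
      · rw [Nat.le_antisymm hkm h]; exact hmem (m+1)
  refine ⟨fun m => (S m).1, rfl, ?_, ?_⟩
  · intro m
    cases m with
    | zero =>
      show dist (x 0) (x 0) ≤ ρ
      simp [hρ.le]
    | succ m =>
      show dist ((S (m+1)).1) (x (m+1)) ≤ ρ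
      rw [hstep1]; exact hp1 _ _
  · have key : ∀ k m, k < m → (S k).1 ≠ (S m).1 := by
      intro k m hkm
      obtain ⟨m', rfl⟩ := Nat.exists_eq_add_of_lt hkm
      intro heq
      have h1 : (S k).1 ∈ (S (k + m')).2 := hcum k (k + m') (Nat.le_add_right _ _)
      have h2 : (S (k + m' + 1)).1 ∉ (S (k + m')).2 := by rw [hstep1]; exact hp2 _ _
      rw [← heq] at h2
      exact h2 h1
    intro k m hkm
    rcases Nat.lt_trichotomy k m with h | h | h
    · exact absurd hkm (key k m h)
    · exact h
    · exact absurd hkm.symm (key m k h)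

open MeasureTheory

/-- `f` is `μ`-topologically stable. -/
def MuTopStable {X : Type*} [MetricSpace X] [MeasurableSpace X]
    (μ : Measure X) (f : X → X) : Prop :=
  ∀ ε > 0, ∃ δ > 0, ∀ g : X → X, Continuous g →
    (∀ x, dist (f x) (g x) ≤ δ) →
    ∃ (Y : Set X) (hg : Set.MapsTo g Y Y), IsCompact Y ∧
      μ Yᶜ ≤ ENNReal.ofReal ε ∧
      ∃ h : Y → X, Continuous h ∧ (∀ y : Y, dist (h y) (y : X) ≤ ε) ∧
        ∀ y : Y, f (h y) = h ⟨g y, hg y.2⟩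

/-- `f` has the `μ`-shadowing property. -/
def MuShadowing {X : Type*} [MetricSpace X] [MeasurableSpace X]
    (μ : Measure X) (f : X → X) : Prop :=
  ∀ ε > 0, ∃ δ > 0, ∃ B : Set X, MeasurableSet B ∧ μ B = 1 ∧
    ∀ x : ℕ → X, x 0 ∈ B → (∀ n, dist (f (x n)) (x (n + 1)) ≤ δ) →
      ∃ y : X, ∀ n, dist (f^[n] y) (x n) ≤ ε

theorem muShadowing_of_muTopStable_finitelySupported
    {n : ℕ} (hn : 2 ≤ n) {M : Type*} [MetricSpace M] [CompactSpace M]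
    [ChartedSpace (EuclideanSpace ℝ (Fin n)) M]
    [MeasurableSpace M] [BorelSpace M]
    (f : M ≃ₜ M) (μ : Measure M) [IsProbabilityMeasure μ]
    (hfs : ∃ (k : ℕ) (p : Fin k → M) (t : Fin k → ℝ),
      (∀ i, t i ∈ Set.Ioo (0 : ℝ) 1) ∧ (∑ i, t i = 1) ∧
      μ = ∑ i, ENNReal.ofReal (t i) • Measure.dirac (p i))
    (hstab : MuTopStable μ (f : M → M)) :
    MuShadowing μ (f : M → M) := by
  classical
  intro ε hε
  obtain ⟨k, p, t, ht01, htsum, hμ⟩ := hfs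
  have hk : 0 < k := by
    rcases Nat.eq_zero_or_pos k with hk0 | hk0
    · subst hk0; simp at htsum
    · exact hk0
  haveI : Nonempty (Fin k) := ⟨⟨0, hk⟩⟩
  set tmin := Finset.univ.inf' Finset.univ_nonempty t with htmin
  have htmin_pos : 0 < tmin := by
    rw [htmin, Finset.lt_inf'_iff]
    exact fun i _ => (ht01 i).1
  have htmin_le : ∀ i, tmin ≤ t i := fun i => Finset.inf'_le _ (Finset.mem_univ i)
  set ε' := min (ε / 2) (tmin / 2) with hε'def
  have hε' : 0 < ε' := lt_min (by positivity) (by positivity)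
  obtain ⟨δ₀, hδ₀, Hstab⟩ := hstab ε' hε'
  obtain ⟨δB, hδB, HB⟩ := moveB (n := n) (M := M) hδ₀
  have hfu : UniformContinuous (f : M → M) :=
    CompactSpace.uniformContinuous_of_continuous f.continuous
  obtain ⟨ρ₀, hρ₀, hρ₀p⟩ := Metric.uniformContinuous_iff.mp hfu (δB / 3) (by positivity)
  set ρ := min (min (ρ₀ / 2) (δB / 3)) (ε / 2) with hρdef
  have hρ : 0 < ρ := lt_min (lt_min (by positivity) (by positivity)) (by positivity)
  have hρf : ∀ u v : M, dist u v ≤ ρ → dist (f u) (f v) ≤ δB / 3 := by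
    intro u v huv
    have : dist u v < ρ₀ := by
      have h1 : ρ ≤ ρ₀ / 2 := le_trans (min_le_left _ _) (min_le_left _ _)
      linarith
    exact (hρ₀p this).le
  have hρδB : ρ ≤ δB / 3 := le_trans (min_le_left _ _) (min_le_right _ _)
  have hρε : ρ ≤ ε / 2 := min_le_right _ _
  refine ⟨δB / 3, by positivity, Set.range p, (Set.finite_range p).measurableSet, ?_, ?_⟩
  · -- μ (range p) = 1
    rw [hμ, Measure.finset_sum_apply]
    have hterm : ∀ i ∈ Finset.univ, (ENNReal.ofReal (t i) • Measure.dirac (p i)) (Set.range p)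
        = ENNReal.ofReal (t i) := by
      intro i _
      rw [Measure.smul_apply, Measure.dirac_apply, Set.indicator_of_mem (Set.mem_range_self i)]
      simp
    rw [Finset.sum_congr rfl hterm, ← ENNReal.ofReal_sum_of_nonneg (fun i _ => (ht01 i).1.le),
      htsum, ENNReal.ofReal_one]
  intro x hx0 hxpo
  obtain ⟨i0, hi0⟩ := hx0
  obtain ⟨x', hx'0, hx'd, hx'inj⟩ := exists_inj_seq (le_trans one_le_two hn) x hρ
  have main : ∀ N : ℕ, ∃ y : M, ∀ j ≤ N, dist ((f : M → M)^[j] y) (x j) ≤ ε' + ρ := by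
    intro N
    set a : Fin N → M := fun j => f (x' (j : ℕ)) with ha
    set b : Fin N → M := fun j => x' ((j : ℕ) + 1) with hb
    have hainj : Function.Injective a := by
      intro j j' hjj'
      have := hx'inj (f.injective hjj')
      exact Fin.ext this
    have hab : ∀ j, dist (a j) (b j) ≤ δB := by
      intro j
      have h1 : dist (f (x' (j : ℕ))) (f (x (j : ℕ))) ≤ δB / 3 := hρf _ _ (hx'd _)
      have h2 : dist (f (x (j : ℕ))) (x ((j : ℕ) + 1)) ≤ δB / 3 := hxpo _
      have h3 : dist (x ((j : ℕ) + 1)) (x' ((j : ℕ) + 1)) ≤ ρ := by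
        rw [dist_comm]; exact hx'd _
      have h4 := dist_triangle4 (f (x' (j : ℕ))) (f (x (j : ℕ))) (x ((j : ℕ) + 1))
        (x' ((j : ℕ) + 1))
      rw [ha, hb]
      simp only
      linarith
    obtain ⟨φ, hφc, hφab, hφd⟩ := HB N a b hainj hab
    set g : M → M := φ ∘ (f : M → M) with hg
    have hgc : Continuous g := hφc.comp f.continuous
    have hgf : ∀ z, dist ((f : M → M) z) (g z) ≤ δ₀ := by
      intro z
      rw [hg]
      simp only [Function.comp_apply]
      rw [dist_comm]
      exact hφd _
    obtain ⟨Y, hgY, hYc, hYμ, h, hhc, hhd, hconj⟩ := Hstab g hgc hgf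
    have hx0Y : x 0 ∈ Y := by
      by_contra hxY
      have h1 : μ {x 0} ≤ μ Yᶜ := measure_mono (by simpa using hxY)
      have h2 : ENNReal.ofReal (t i0) ≤ μ {x 0} := by
        rw [hμ, Measure.finset_sum_apply]
        have hterm : (ENNReal.ofReal (t i0) • Measure.dirac (p i0)) {x 0}
            = ENNReal.ofReal (t i0) := by
          rw [Measure.smul_apply, Measure.dirac_apply,
            Set.indicator_of_mem (by simp [hi0] : p i0 ∈ ({x 0} : Set M))]
          simp
        calc ENNReal.ofReal (t i0)
            = (ENNReal.ofReal (t i0) • Measure.dirac (p i0)) {x 0} := hterm.symm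
          _ ≤ ∑ i, (ENNReal.ofReal (t i) • Measure.dirac (p i)) {x 0} :=
            Finset.single_le_sum (f := fun i => (ENNReal.ofReal (t i) • Measure.dirac (p i)) ({x 0} : Set M)) (fun i _ => zero_le) (Finset.mem_univ i0)
      have h4 : ENNReal.ofReal (t i0) ≤ ENNReal.ofReal ε' := le_trans h2 (le_trans h1 hYμ)
      rw [ENNReal.ofReal_le_ofReal_iff hε'.le] at h4
      have h5 : ε' ≤ tmin / 2 := min_le_right _ _
      have h6 := htmin_le i0
      linarith
    have hgx' : ∀ j : ℕ, j < N → g (x' j) = x' (j + 1) := by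
      intro j hj
      have := hφab ⟨j, hj⟩
      rw [ha, hb] at this
      simpa [hg] using this
    set q : ℕ → Y := fun j => Nat.rec (⟨x 0, hx0Y⟩ : Y) (fun _ prev => ⟨g ↑prev, hgY prev.2⟩) j
      with hq
    have hqstep : ∀ j, ((q (j + 1)) : M) = g (q j) := fun j => rfl
    have hqx : ∀ j ≤ N, ((q j) : M) = x' j := by
      intro j hj
      induction j with
      | zero => exact hx'0.symm
      | succ j ih =>
        rw [hqstep, ih (le_trans (Nat.le_succ j) hj)]
        exact hgx' j (Nat.succ_le.mp hj)
    have hconjq : ∀ j, (f : M → M)^[j] (h (q 0)) = h (q j) := by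
      intro j
      induction j with
      | zero => rfl
      | succ j ih =>
        rw [Function.iterate_succ_apply', ih, hconj (q j)]
    refine ⟨h (q 0), ?_⟩
    intro j hj
    rw [hconjq j]
    have hd1 : dist (h (q j)) ((q j) : M) ≤ ε' := hhd (q j)
    have hd2 : dist ((q j) : M) (x j) ≤ ρ := by
      rw [hqx j hj]; exact hx'd j
    have := dist_triangle (h (q j)) ((q j) : M) (x j)
    linarith
  choose yN hyN using main
  obtain ⟨y, -, ψ, hψmono, hψtend⟩ := isCompact_univ.tendsto_subseq
    (x := yN) (fun N => Set.mem_univ _)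
  refine ⟨y, ?_⟩
  intro j
  have h1 : Filter.Tendsto (fun m => (f : M → M)^[j] (yN (ψ m))) Filter.atTop
      (nhds ((f : M → M)^[j] y)) := ((f.continuous.iterate j).tendsto y).comp hψtend
  have htend : Filter.Tendsto (fun m => dist ((f : M → M)^[j] (yN (ψ m))) (x j)) Filter.atTop
      (nhds (dist ((f : M → M)^[j] y) (x j))) := h1.dist tendsto_const_nhds
  apply le_of_tendsto htend
  filter_upwards [Filter.eventually_ge_atTop j] with m hm
  have hjm : j ≤ ψ m := le_trans hm (hψmono.le_apply)
  have := hyN (ψ m) j hjm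
  have hεε : ε' + ρ ≤ ε := by
    have h5 : ε' ≤ ε / 2 := min_le_left _ _
    linarith
  linarith
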